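/- For the potential V(q) = (1/k)·∑_{i=1}^n q_i^k with k > 2, the number of points [d] ∈ ℂℙ^{n-1} such that V'(d) = γ·d for some γ ∈ ℂ* equals D(n,k) = ((k-1)^n - 1)/(k-2). Equivalently, the set of solutions (q₀, q) ∈ ℂ^{n+1} of q_i^{k-1} = q₀^{k-2}·q_i for i = 1,…,n, viewed projectively, has cardinality (k-1)^n. -/

import Mathlib

open MvPolynomial

section Aux
open Polynomial Projectivization Finset

lemma cardS (k : ℕ) (hk : 2 < k) : Nat.card {z : ℂ // z ^ (k-1) = z} = k - 1 := by
  have h2 : 0 < k - 2 := by omega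
  have hset : {z : ℂ | z ^ (k-1) = z} = ↑(insert (0:ℂ) (nthRootsFinset (k-2) (1:ℂ))) := by
    ext z
    simp only [Set.mem_setOf_eq, Finset.coe_insert, Set.mem_insert_iff, Finset.mem_coe,
      mem_nthRootsFinset h2]
    constructor
    · intro h
      rcases eq_or_ne z 0 with rfl | hz
      · exact Or.inl rfl
      · right
        have h1 : k - 1 = (k-2) + 1 := by omega
        rw [h1, pow_succ] at h
        exact mul_right_cancel₀ hz (by rw [h, one_mul])
    · rintro (rfl | h)
      · simp [zero_pow (by omega : k - 1 ≠ 0)]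
      · have h1 : k - 1 = (k-2) + 1 := by omega
        rw [h1, pow_succ, h, one_mul]
  have key : Nat.card {z : ℂ | z ^ (k-1) = z} = (insert (0:ℂ) (nthRootsFinset (k-2) (1:ℂ))).card := by
    rw [Nat.card_coe_set_eq, hset, Set.ncard_coe_finset]
  rw [show ({z : ℂ // z ^ (k-1) = z}) = {z : ℂ | z ^ (k-1) = z} from rfl]
  rw [key, Finset.card_insert_of_notMem, (Complex.isPrimitiveRoot_exp (k-2) (by omega)).card_nthRootsFinset]
  · omega
  · rw [mem_nthRootsFinset h2]
    simp [zero_pow (by omega : k - 2 ≠ 0)]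

variable {n : ℕ}

lemma filter_ne_nonempty (v : Fin n → ℂ) (hv : v ≠ 0) :
    (Finset.univ.filter (fun i => v i ≠ 0)).Nonempty := by
  obtain ⟨i, hi⟩ := Function.ne_iff.mp hv
  exact ⟨i, by simpa using hi⟩

noncomputable def minIdx (v : Fin n → ℂ) (hv : v ≠ 0) : Fin n :=
  (Finset.univ.filter (fun i => v i ≠ 0)).min' (filter_ne_nonempty v hv)

lemma minIdx_ne (v : Fin n → ℂ) (hv : v ≠ 0) : v (minIdx v hv) ≠ 0 := by
  simpa [minIdx] using Finset.min'_mem _ (filter_ne_nonempty v hv)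

lemma minIdx_lt (v : Fin n → ℂ) (hv : v ≠ 0) {j : Fin n} (hj : j < minIdx v hv) : v j = 0 := by
  by_contra h
  exact absurd (Finset.min'_le _ j (by simp [h])) (not_le.mpr hj)

lemma minIdx_eq (v : Fin n → ℂ) (hv : v ≠ 0) {i : Fin n} (hi : v i ≠ 0)
    (h0 : ∀ j, j < i → v j = 0) : minIdx v hv = i := by
  have h1 : minIdx v hv ≤ i := Finset.min'_le _ i (by simp [hi])
  rcases lt_or_eq_of_le h1 with h | h
  · exact absurd (h0 _ h) (minIdx_ne v hv)
  · exact h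

lemma minIdx_smul (v : Fin n → ℂ) (hv : v ≠ 0) (a : ℂ) (ha : a ≠ 0) :
    minIdx (a • v) (by simpa [smul_eq_zero, ha] using hv) = minIdx v hv := by
  apply minIdx_eq
  · simpa [ha] using minIdx_ne v hv
  · intro j hj
    simp [minIdx_lt v hv hj]

lemma W_ne_zero (f : Fin n → ℂ)
    (h : ∃ i : Fin n, f i = 1 ∧ ∀ j, j < i → f j = 0) : f ≠ 0 := by
  obtain ⟨i, hi, -⟩ := h
  intro h0
  rw [h0] at hi
  simpa using hi

noncomputable def equivDW (n k : ℕ) (hk : 2 < k) :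
    {p : Projectivization ℂ (Fin n → ℂ) //
      ∃ γ : ℂ, γ ≠ 0 ∧ ∀ i, p.rep i ^ (k-1) = γ * p.rep i} ≃
    {f : Fin n → ℂ // (∀ i, f i ^ (k-1) = f i) ∧
      ∃ i : Fin n, f i = 1 ∧ ∀ j, j < i → f j = 0} := by
  have h1 : k - 1 = (k-2) + 1 := by omega
  refine
  { toFun := fun p =>
      ⟨(p.1.rep (minIdx p.1.rep p.1.rep_nonzero))⁻¹ • p.1.rep, ?_, ?_⟩
    invFun := fun f => ⟨Projectivization.mk ℂ f.1 (W_ne_zero f.1 f.2.2), ?_⟩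
    left_inv := ?_
    right_inv := ?_ }
  · -- ∀ i, f i ^ (k-1) = f i
    obtain ⟨p, γ, hγ, hp⟩ := p
    intro i
    set b := p.rep (minIdx p.rep p.rep_nonzero) with hbdef
    have hb : b ≠ 0 := minIdx_ne p.rep p.rep_nonzero
    have hγb : γ = b ^ (k-2) := by
      have h := hp (minIdx p.rep p.rep_nonzero)
      rw [← hbdef, h1, pow_succ] at h
      exact (mul_right_cancel₀ hb h.symm)
    simp only [Pi.smul_apply, smul_eq_mul, mul_pow, hp i, hγb]
    rw [inv_pow]
    field_simp
    rw [h1, pow_succ]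
    ring
  · -- witness
    obtain ⟨p, γ, hγ, hp⟩ := p
    refine ⟨minIdx p.rep p.rep_nonzero, ?_, ?_⟩
    · simp [inv_mul_cancel₀ (minIdx_ne p.rep p.rep_nonzero)]
    · intro j hj
      simp [minIdx_lt p.rep p.rep_nonzero hj]
  · -- Darboux property of mk f
    obtain ⟨f, hf, hex⟩ := f
    obtain ⟨a, ha⟩ := Projectivization.exists_smul_eq_mk_rep ℂ f (W_ne_zero f hex)
    refine ⟨(a : ℂ) ^ (k-2), pow_ne_zero _ a.ne_zero, fun i => ?_⟩
    rw [← ha]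
    simp only [Pi.smul_apply, Units.smul_def, smul_eq_mul, mul_pow, hf i]
    rw [h1, pow_succ]
    ring
  · -- left inverse
    rintro ⟨p, hp⟩
    apply Subtype.ext
    show Projectivization.mk ℂ _ _ = p
    conv_rhs => rw [← p.mk_rep]
    rw [mk_eq_mk_iff']
    exact ⟨_, rfl⟩
  · -- right inverse
    rintro ⟨f, hf, hex⟩
    apply Subtype.ext
    show _ • (Projectivization.mk ℂ f _).rep = f
    obtain ⟨a, ha⟩ := Projectivization.exists_smul_eq_mk_rep ℂ f (W_ne_zero f hex)
    obtain ⟨i, hi1, hi0⟩ := hex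
    set p := Projectivization.mk ℂ f (W_ne_zero f ⟨i, hi1, hi0⟩)
    have hmin : minIdx p.rep p.rep_nonzero = i := by
      apply minIdx_eq
      · rw [← ha]; simp [hi1, Units.smul_def, a.ne_zero]
      · intro j hj
        rw [← ha]; simp [hi0 j hj, Units.smul_def]
    rw [hmin, ← ha]
    funext j
    simp [hi1, Units.smul_def, inv_mul_cancel_left₀ a.ne_zero]

lemma witness_unique {f : Fin n → ℂ} {i i' : Fin n}
    (h : f i = 1 ∧ ∀ j, j < i → f j = 0) (h' : f i' = 1 ∧ ∀ j, j < i' → f j = 0) : i = i' := by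
  rcases lt_trichotomy i i' with hlt | he | hgt
  · have := h'.2 i hlt; rw [h.1] at this; simp at this
  · exact he
  · have := h.2 i' hgt; rw [h'.1] at this; simp at this

noncomputable def equivSW (n k : ℕ) (hk : 2 < k) :
    (Σ i : Fin n, ({j : Fin n // i < j} → {z : ℂ // z ^ (k-1) = z})) ≃
    {f : Fin n → ℂ // (∀ i, f i ^ (k-1) = f i) ∧
      ∃ i : Fin n, f i = 1 ∧ ∀ j, j < i → f j = 0} := by
  classical
  refine Equiv.ofBijective
    (fun x => ⟨fun j => if h : x.1 < j then (x.2 ⟨j, h⟩ : ℂ) else if j = x.1 then 1 else 0,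
      ?_, x.1, ?_, ?_⟩) ⟨?_, ?_⟩
  · intro j
    by_cases h : x.1 < j
    · simp only [dif_pos h]; exact (x.2 ⟨j, h⟩).2
    · by_cases h' : j = x.1 <;>
        simp [dif_neg h, h', zero_pow (by omega : k - 1 ≠ 0)]
  · simp
  · intro j hj
    simp [not_lt.mpr hj.le, hj.ne]
  · rintro ⟨i, g⟩ ⟨i', g'⟩ h
    simp only [Subtype.mk.injEq] at h
    obtain rfl : i = i' := by
      refine witness_unique (f := fun j => if h : i < j then (g ⟨j, h⟩ : ℂ) else if j = i then 1 else 0)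
        ⟨by simp, fun j hj => by simp [not_lt.mpr hj.le, hj.ne]⟩ ?_
      constructor
      · have := congrFun h i'; simp only at this; rw [this]; simp
      · intro j hj
        rw [show (if h : i < j then (g ⟨j, h⟩ : ℂ) else if j = i then 1 else 0) = _ from congrFun h j]; simp [not_lt.mpr hj.le, hj.ne]
    simp only [Sigma.mk.inj_iff, heq_eq_eq, true_and]
    funext j
    have := congrFun h j
    rw [dif_pos j.2, dif_pos j.2] at this
    apply Subtype.ext
    simpa using this
  · rintro ⟨f, hf, i, hi1, hi0⟩
    refine ⟨⟨i, fun j => ⟨f j, hf j⟩⟩, ?_⟩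
    apply Subtype.ext
    funext j
    by_cases h : i < j
    · simp [dif_pos h]
    · by_cases h' : j = i
      · subst h'; simp [dif_neg h, hi1]
      · have : j < i := lt_of_le_of_ne (not_lt.mp h) h'
        simp [dif_neg h, h', (hi0 j this).symm]



lemma cardSigma (n k : ℕ) (hk : 2 < k) :
    Nat.card (Σ i : Fin n, ({j : Fin n // i < j} → {z : ℂ // z ^ (k-1) = z}))
      = ∑ m ∈ Finset.range n, (k-1)^m := by
  classical
  haveI : Finite {z : ℂ // z ^ (k-1) = z} :=
    Nat.finite_of_card_ne_zero (by rw [cardS k hk]; omega)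
  haveI : Fintype {z : ℂ // z ^ (k-1) = z} := Fintype.ofFinite _
  have hcard : Fintype.card {z : ℂ // z ^ (k-1) = z} = k - 1 := by
    rw [← Nat.card_eq_fintype_card, cardS k hk]
  rw [Nat.card_eq_fintype_card, Fintype.card_sigma]
  have hsub : ∀ i : Fin n, Fintype.card {j : Fin n // i < j} = n - 1 - i := by
    intro i
    rw [Fintype.card_subtype]
    rw [Finset.filter_lt_eq_Ioi, Fin.card_Ioi]
  calc ∑ i : Fin n, Fintype.card ({j : Fin n // i < j} → {z : ℂ // z ^ (k-1) = z})
      = ∑ i : Fin n, (k-1) ^ (n - 1 - (i : ℕ)) := by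
        refine Finset.sum_congr rfl fun i _ => ?_
        rw [Fintype.card_fun, hcard, hsub i]
    _ = ∑ m ∈ Finset.range n, (k-1) ^ (n - 1 - m) := Fin.sum_univ_eq_sum_range (fun m => (k-1)^(n-1-m)) n
    _ = ∑ m ∈ Finset.range n, (k-1) ^ m := Finset.sum_range_reflect _ n

lemma geomDiv (n k : ℕ) (hk : 2 < k) :
    ((k-1)^n - 1) / (k-2) = ∑ m ∈ Finset.range n, (k-1)^m := by
  have key : ∀ N : ℕ, (k-1)^N - 1 = (∑ m ∈ Finset.range N, (k-1)^m) * (k-2) := by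
    intro N
    induction N with
    | zero => simp
    | succ N ih =>
      rw [Finset.sum_range_succ, pow_succ]
      have ha : 1 ≤ (k-1)^N := Nat.one_le_pow _ _ (by omega)
      have hk1 : k - 1 = (k-2) + 1 := by omega
      have h2 : (k-1)^N * (k-1) = (k-1)^N * (k-2) + (k-1)^N := by rw [hk1]; ring
      rw [add_mul, ← ih, h2]
      omega
  rw [key n]
  exact Nat.mul_div_cancel _ (by omega)


lemma rep0_ne (n k : ℕ) (hk : 2 < k) (p : Projectivization ℂ (Fin (n + 1) → ℂ))
    (hp : ∀ i : Fin n, (p.rep i.succ) ^ (k - 1) = (p.rep 0) ^ (k - 2) * p.rep i.succ) :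
    p.rep 0 ≠ 0 := by
  intro h0
  apply p.rep_nonzero
  funext j
  refine Fin.cases ?_ ?_ j
  · exact h0
  · intro i
    have h := hp i
    rw [h0, zero_pow (by omega : k - 2 ≠ 0), zero_mul] at h
    exact pow_eq_zero_iff (by omega : k - 1 ≠ 0) |>.mp h

noncomputable def equiv2 (n k : ℕ) (hk : 2 < k) :
    {p : Projectivization ℂ (Fin (n + 1) → ℂ) //
        ∀ i : Fin n, (p.rep i.succ) ^ (k - 1) = (p.rep 0) ^ (k - 2) * p.rep i.succ} ≃
    (Fin n → {z : ℂ // z ^ (k-1) = z}) := by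
  have h1 : k - 1 = (k-2) + 1 := by omega
  refine
  { toFun := fun p => fun i => ⟨p.1.rep i.succ / p.1.rep 0, ?_⟩
    invFun := fun f => ⟨Projectivization.mk ℂ (Fin.cons 1 (fun i => (f i : ℂ)))
        (fun h => by simpa using congrFun h 0), ?_⟩
    left_inv := ?_
    right_inv := ?_ }
  · obtain ⟨p, hp⟩ := p
    have hb := rep0_ne n k hk p hp
    show (p.rep i.succ / p.rep 0) ^ (k-1) = p.rep i.succ / p.rep 0
    rw [div_pow, hp i, h1, pow_succ, mul_div_mul_left _ _ (pow_ne_zero _ hb)]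
  · intro i
    obtain ⟨a, ha⟩ := Projectivization.exists_smul_eq_mk_rep ℂ
      (Fin.cons 1 (fun i => ((f i : ℂ))) : Fin (n+1) → ℂ) (fun h => by simpa using congrFun h 0)
    rw [← ha]
    simp only [Pi.smul_apply, Fin.cons_succ, Fin.cons_zero, Units.smul_def, smul_eq_mul, mul_one,
      mul_pow]
    set z := ((f i : ℂ)) with hzdef
    have hz : z ^ (k-1) = z := (f i).2
    rw [hz, h1, pow_succ]
    ring
  · rintro ⟨p, hp⟩
    apply Subtype.ext
    have hb := rep0_ne n k hk p hp
    show Projectivization.mk ℂ _ _ = p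
    conv_rhs => rw [← p.mk_rep]
    rw [mk_eq_mk_iff']
    refine ⟨(p.rep 0)⁻¹, ?_⟩
    funext j
    refine Fin.cases ?_ ?_ j
    · simp [inv_mul_cancel₀ hb]
    · intro i
      simp [div_eq_inv_mul]
  · intro f
    funext i
    apply Subtype.ext
    obtain ⟨a, ha⟩ := Projectivization.exists_smul_eq_mk_rep ℂ
      (Fin.cons 1 (fun i => ((f i : ℂ))) : Fin (n+1) → ℂ) (fun h => by simpa using congrFun h 0)
    show _ / _ = (f i : ℂ)
    rw [← ha]
    simp only [Pi.smul_apply, Fin.cons_succ, Fin.cons_zero, Units.smul_def, smul_eq_mul]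
    rw [mul_div_mul_left _ _ a.ne_zero, div_one]

lemma evalPderiv (n k : ℕ) (hk : 2 < k) (v : Fin n → ℂ) (i : Fin n) :
    eval v (pderiv i (MvPolynomial.C ((k : ℂ))⁻¹ * ∑ j, X j ^ k)) = v i ^ (k-1) := by
  have hk0 : (k : ℂ) ≠ 0 := by exact_mod_cast (by omega : k ≠ 0)
  simp [pderiv_C_mul, pderiv_pow, pderiv_X, Pi.single_apply]
  rw [← mul_assoc, inv_mul_cancel₀ hk0, one_mul]

end Aux

/-- For `V(q) = (1/k)·∑ qᵢᵏ` with `k > 2`, the number of proper Darboux points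
`[d] ∈ ℂℙ^{n-1}` (i.e. `V'(d) = γ·d`, `γ ≠ 0`) equals
`D(n,k) = ((k-1)^n - 1)/(k-2)`; equivalently, the projective solution set of
`qᵢ^{k-1} = q₀^{k-2}·qᵢ`, `i = 1,…,n`, has cardinality `(k-1)^n`. -/
theorem stmt4 (n k : ℕ) (hn : 1 ≤ n) (hk : 2 < k) :
    (Nat.card {p : Projectivization ℂ (Fin n → ℂ) //
        ∃ γ : ℂ, γ ≠ 0 ∧ ∀ i,
          eval p.rep (pderiv i (C ((k : ℂ))⁻¹ * ∑ j, X j ^ k)) = γ * p.rep i}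
      = ((k - 1) ^ n - 1) / (k - 2)) ∧
    (Nat.card {p : Projectivization ℂ (Fin (n + 1) → ℂ) //
        ∀ i : Fin n, (p.rep i.succ) ^ (k - 1) = (p.rep 0) ^ (k - 2) * p.rep i.succ}
      = (k - 1) ^ n) := by
  constructor
  · have e1 : {p : Projectivization ℂ (Fin n → ℂ) //
        ∃ γ : ℂ, γ ≠ 0 ∧ ∀ i,
          eval p.rep (pderiv i (C ((k : ℂ))⁻¹ * ∑ j, X j ^ k)) = γ * p.rep i} ≃
        {p : Projectivization ℂ (Fin n → ℂ) //
          ∃ γ : ℂ, γ ≠ 0 ∧ ∀ i, p.rep i ^ (k-1) = γ * p.rep i} :=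
      Equiv.subtypeEquivRight (fun p => by
        simp only [evalPderiv n k hk p.rep])
    rw [Nat.card_congr (((e1.trans (equivDW n k hk)).trans (equivSW n k hk).symm)),
      cardSigma n k hk, geomDiv n k hk]
  · haveI : Finite {z : ℂ // z ^ (k-1) = z} :=
      Nat.finite_of_card_ne_zero (by rw [cardS k hk]; omega)
    rw [Nat.card_congr (equiv2 n k hk), Nat.card_fun, cardS k hk,
      Nat.card_eq_fintype_card, Fintype.card_fin]
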